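/- arXiv:math/0404460 — 2 statements merged into one kernel-verified Lean document; each statement's English description precedes it below -/
import Mathlib

section
/- Two-sided entropy-covariance inequality: for any probability measure ν on a finite set, nonnegative f, function g, and t > 0, |ν[f, g]| ≤ (ν[f]/t) · log( max( ν[e^{t(g−ν[g])}], ν[e^{−t(g−ν[g])}] ) ) + (1/t) · Ent_ν(f), where ν[f,g] := ν[fg] − ν[f]ν[g]. -/
open Finset

lemma young_ineq (a b m Z : ℝ) (ha : 0 ≤ a) (hm : 0 < m) (hZ : 0 < Z) :
    a * b ≤ a * Real.log a - a * Real.log m + a * Real.log Z - a + (m / Z) * Real.exp b := by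
  rcases eq_or_lt_of_le ha with h | h
  · simp only [← h, zero_mul, mul_zero, sub_zero, add_zero, zero_add, zero_sub, neg_zero]
    positivity
  · have hx := Real.add_one_le_exp (b + Real.log m - Real.log Z - Real.log a)
    rw [Real.exp_sub, Real.exp_sub, Real.exp_add, Real.exp_log hm, Real.exp_log hZ,
      Real.exp_log h] at hx
    have h2 : Real.exp b * m / Z / a * a = m / Z * Real.exp b := by
      field_simp
    nlinarith [mul_le_mul_of_nonneg_left hx h.le]

lemma ent_var {Ω : Type*} [Fintype Ω] (ν f h : Ω → ℝ) (hν : ∀ ω, 0 ≤ ν ω)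
    (hf : ∀ ω, 0 ≤ f ω) (hm : 0 < ∑ ω, ν ω * f ω)
    (hZ : 0 < ∑ ω, ν ω * Real.exp (h ω)) :
    ∑ ω, ν ω * (f ω * h ω) ≤
      (∑ ω, ν ω * f ω) * Real.log (∑ ω, ν ω * Real.exp (h ω)) +
      ((∑ ω, ν ω * (f ω * Real.log (f ω))) -
        (∑ ω, ν ω * f ω) * Real.log (∑ ω, ν ω * f ω)) := by
  set m := ∑ ω, ν ω * f ω with hmdef
  set Z := ∑ ω, ν ω * Real.exp (h ω) with hZdef
  have hsum : ∑ ω, ν ω * (f ω * h ω) ≤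
      ∑ ω, (ν ω * (f ω * Real.log (f ω)) - (ν ω * f ω) * Real.log m
        + (ν ω * f ω) * Real.log Z - ν ω * f ω + (m / Z) * (ν ω * Real.exp (h ω))) := by
    apply Finset.sum_le_sum
    intro ω _
    have := mul_le_mul_of_nonneg_left (young_ineq (f ω) (h ω) m Z (hf ω) hm hZ) (hν ω)
    nlinarith [this]
  have hcalc : ∑ ω, (ν ω * (f ω * Real.log (f ω)) - (ν ω * f ω) * Real.log m
        + (ν ω * f ω) * Real.log Z - ν ω * f ω + (m / Z) * (ν ω * Real.exp (h ω)))
      = (∑ ω, ν ω * (f ω * Real.log (f ω))) - m * Real.log m + m * Real.log Z - m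
        + (m / Z) * Z := by
    simp only [Finset.sum_add_distrib, Finset.sum_sub_distrib, ← Finset.sum_mul,
      ← Finset.mul_sum, hmdef, hZdef]
  have hZc : (m / Z) * Z = m := by field_simp
  linarith [hsum, hcalc.le, hcalc.ge]

theorem entropy_covariance_inequality {Ω : Type*} [Fintype Ω]
    (ν f g : Ω → ℝ) (hν : ∀ ω, 0 ≤ ν ω) (hν1 : ∑ ω, ν ω = 1)
    (hf : ∀ ω, 0 ≤ f ω) (hfpos : 0 < ∑ ω, ν ω * f ω) (t : ℝ) (ht : 0 < t) :
    |(∑ ω, ν ω * (f ω * g ω)) - (∑ ω, ν ω * f ω) * (∑ ω, ν ω * g ω)| ≤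
      ((∑ ω, ν ω * f ω) / t) *
        Real.log (max (∑ ω, ν ω * Real.exp (t * (g ω - ∑ ω', ν ω' * g ω')))
          (∑ ω, ν ω * Real.exp (-(t * (g ω - ∑ ω', ν ω' * g ω'))))) +
      (1 / t) * ((∑ ω, ν ω * (f ω * Real.log (f ω))) -
        (∑ ω, ν ω * f ω) * Real.log (∑ ω, ν ω * f ω)) := by
  set G := ∑ ω', ν ω' * g ω' with hG
  set m := ∑ ω, ν ω * f ω with hm
  set E := (∑ ω, ν ω * (f ω * Real.log (f ω))) - m * Real.log m with hE
  -- some ν ω > 0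
  obtain ⟨ω₀, hω₀⟩ : ∃ ω, 0 < ν ω := by
    by_contra hc
    push_neg at hc
    have : ∑ ω, ν ω = 0 := Finset.sum_eq_zero fun ω _ => le_antisymm (hc ω) (hν ω)
    rw [this] at hν1; norm_num at hν1
  have hZpos : ∀ (h : Ω → ℝ), 0 < ∑ ω, ν ω * Real.exp (h ω) := by
    intro h
    have : ν ω₀ * Real.exp (h ω₀) ≤ ∑ ω, ν ω * Real.exp (h ω) :=
      Finset.single_le_sum (f := fun ω => ν ω * Real.exp (h ω))
        (fun ω _ => mul_nonneg (hν ω) (Real.exp_pos _).le) (Finset.mem_univ ω₀)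
    nlinarith [Real.exp_pos (h ω₀)]
  set Zp := ∑ ω, ν ω * Real.exp (t * (g ω - G)) with hZp
  set Zm := ∑ ω, ν ω * Real.exp (-(t * (g ω - G))) with hZm
  have hZpp : 0 < Zp := hZpos _
  have hZmp : 0 < Zm := hZpos _
  have hmax : 0 < max Zp Zm := lt_max_of_lt_left hZpp
  have key1 := ent_var ν f (fun ω => t * (g ω - G)) hν hf hfpos (hZpos _)
  have key2 := ent_var ν f (fun ω => -(t * (g ω - G))) hν hf hfpos (hZpos _)
  simp only [← hm, ← hZp, ← hZm, ← hE] at key1 key2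
  have hsum1 : ∑ ω, ν ω * (f ω * (t * (g ω - G)))
      = t * ((∑ ω, ν ω * (f ω * g ω)) - m * G) := by
    have e1 : ∑ ω, ν ω * (f ω * (t * (g ω - G)))
        = ∑ ω, (t * (ν ω * (f ω * g ω)) - t * ((ν ω * f ω) * G)) :=
      Finset.sum_congr rfl fun ω _ => by ring
    rw [e1, Finset.sum_sub_distrib, ← Finset.mul_sum, ← Finset.mul_sum, ← Finset.sum_mul,
      ← hm]
    ring
  have hsum2 : ∑ ω, ν ω * (f ω * (-(t * (g ω - G))))
      = -(t * ((∑ ω, ν ω * (f ω * g ω)) - m * G)) := by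
    rw [← hsum1, ← Finset.sum_neg_distrib]
    exact Finset.sum_congr rfl fun ω _ => by ring
  have hlog1 : Real.log Zp ≤ Real.log (max Zp Zm) :=
    Real.log_le_log hZpp (le_max_left _ _)
  have hlog2 : Real.log Zm ≤ Real.log (max Zp Zm) :=
    Real.log_le_log hZmp (le_max_right _ _)
  rw [abs_le]
  have hb1 : t * ((∑ ω, ν ω * (f ω * g ω)) - m * G) ≤ m * Real.log (max Zp Zm) + E := by
    rw [← hsum1]
    calc ∑ ω, ν ω * (f ω * (t * (g ω - G))) ≤ m * Real.log Zp + E := key1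
      _ ≤ m * Real.log (max Zp Zm) + E := by nlinarith
  have hb2 : -(t * ((∑ ω, ν ω * (f ω * g ω)) - m * G)) ≤ m * Real.log (max Zp Zm) + E := by
    rw [← hsum2]
    calc ∑ ω, ν ω * (f ω * (-(t * (g ω - G)))) ≤ m * Real.log Zm + E := key2
      _ ≤ m * Real.log (max Zp Zm) + E := by nlinarith
  have hR : (m / t) * Real.log (max Zp Zm) + (1 / t) * E
      = (m * Real.log (max Zp Zm) + E) / t := by ring
  constructor
  · rw [hR, ← neg_div, div_le_iff₀ ht]
    nlinarith [hb2]
  · rw [hR, le_div_iff₀ ht]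
    nlinarith [hb1]
end

section
/- Normalization identity from reversibility: in the setting of the zero-range canonical measure with Λ = Λ₁ ∪ Λ₂, h(k) := (k+1)/c(k+1), and γ(n) := ν_Λ^N[η̄_{Λ₁}=n], for any y ∈ Λ₂ and n ∈ {1,…,N}: (γ(n−1)/(n γ(n))) · ν_Λ^N[ c(η_y) ∑_{x∈Λ₁} h(η_x) | η̄_{Λ₁} = n−1 ] = 1. -/
open Finset

/-- `cfact c n = c(1)⋯c(n)`, with `cfact c 0 = 1`. -/
noncomputable def cfact (c : ℕ → ℝ) (n : ℕ) : ℝ := ∏ k ∈ Finset.range n, c (k + 1)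

/-- Expectation of `f` under the canonical zero-range measure `ν_Λ^N` conditioned on
`η̄_{Λ₁} = n`. -/
noncomputable def condExp (c : ℕ → ℝ) {Λ : Type*} [Fintype Λ] [DecidableEq Λ]
    (Λ₁ : Finset Λ) (N n : ℕ) (f : (Λ → ℕ) → ℝ) : ℝ :=
  (∑ σ : Λ → Fin (N + 1),
      if (∑ z, (σ z : ℕ)) = N ∧ (∑ z ∈ Λ₁, (σ z : ℕ)) = n
      then (∏ z, (cfact c (σ z : ℕ))⁻¹) * f (fun z => (σ z : ℕ)) else 0) /
  (∑ σ : Λ → Fin (N + 1),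
      if (∑ z, (σ z : ℕ)) = N ∧ (∑ z ∈ Λ₁, (σ z : ℕ)) = n
      then ∏ z, (cfact c (σ z : ℕ))⁻¹ else 0)

/-- `γ(n) = ν_Λ^N[η̄_{Λ₁} = n]`. -/
noncomputable def gammaFun (c : ℕ → ℝ) {Λ : Type*} [Fintype Λ] [DecidableEq Λ]
    (Λ₁ : Finset Λ) (N n : ℕ) : ℝ :=
  (∑ σ : Λ → Fin (N + 1),
      if (∑ z, (σ z : ℕ)) = N ∧ (∑ z ∈ Λ₁, (σ z : ℕ)) = n
      then ∏ z, (cfact c (σ z : ℕ))⁻¹ else 0) /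
  (∑ σ : Λ → Fin (N + 1),
      if (∑ z, (σ z : ℕ)) = N then ∏ z, (cfact c (σ z : ℕ))⁻¹ else 0)



lemma ZR.sum_comp_update {α β M : Type*} [AddCommMonoid M] [DecidableEq α]
    (g : β → M) (f : α → β) (a : α) (b : β) (s : Finset α) (ha : a ∈ s) :
    ∑ z ∈ s, g (Function.update f a b z) = g b + ∑ z ∈ s.erase a, g (f z) := by
  rw [← Finset.add_sum_erase s _ ha, Function.update_self]
  congr 1
  refine Finset.sum_congr rfl fun z hz => ?_
  rw [Function.update_of_ne (Finset.ne_of_mem_erase hz)]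

lemma ZR.sum_comp_update_notmem {α β M : Type*} [AddCommMonoid M] [DecidableEq α]
    (g : β → M) (f : α → β) (a : α) (b : β) (s : Finset α) (ha : a ∉ s) :
    ∑ z ∈ s, g (Function.update f a b z) = ∑ z ∈ s, g (f z) :=
  Finset.sum_congr rfl fun z hz => by
    rw [Function.update_of_ne (by rintro rfl; exact ha hz)]

lemma ZR.prod_comp_update {α β M : Type*} [CommMonoid M] [DecidableEq α]
    (g : β → M) (f : α → β) (a : α) (b : β) (s : Finset α) (ha : a ∈ s) :
    ∏ z ∈ s, g (Function.update f a b z) = g b * ∏ z ∈ s.erase a, g (f z) := by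
  rw [← Finset.mul_prod_erase s _ ha, Function.update_self]
  congr 1
  refine Finset.prod_congr rfl fun z hz => ?_
  rw [Function.update_of_ne (Finset.ne_of_mem_erase hz)]

lemma ZR.pair_le_sum {α : Type*} [Fintype α] [DecidableEq α] {x y : α} (hxy : x ≠ y)
    (f : α → ℕ) : f x + f y ≤ ∑ z, f z := by
  have h := Finset.sum_le_sum_of_subset (Finset.subset_univ ({x, y} : Finset α)) (f := f)
  rwa [Finset.sum_pair hxy] at h

lemma ZR.cfact_succ (c : ℕ → ℝ) (m : ℕ) : cfact c (m + 1) = cfact c m * c (m + 1) := by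
  simp [cfact, Finset.prod_range_succ]

lemma ZR.cfact_pos (c : ℕ → ℝ) (hcpos : ∀ k, 0 < k → 0 < c k) (m : ℕ) :
    0 < cfact c m :=
  Finset.prod_pos fun k _ => hcpos _ k.succ_pos

/-- Move a particle from `b` to `a`. -/
noncomputable def ZR.move {Λ : Type*} [DecidableEq Λ] (N : ℕ) (a b : Λ)
    (σ : Λ → Fin (N + 1)) : Λ → Fin (N + 1) :=
  Function.update (Function.update σ a
      ⟨min ((σ a : ℕ) + 1) N, lt_of_le_of_lt (min_le_right _ _) (Nat.lt_succ_self N)⟩)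
    b ⟨(σ b : ℕ) - 1, lt_of_le_of_lt (Nat.sub_le _ _) (σ b).isLt⟩

lemma ZR.move_fst {Λ : Type*} [DecidableEq Λ] (N : ℕ) {a b : Λ} (hab : a ≠ b)
    (σ : Λ → Fin (N + 1)) : (ZR.move N a b σ a : ℕ) = min ((σ a : ℕ) + 1) N := by
  simp [ZR.move, Function.update_of_ne hab]

lemma ZR.move_snd {Λ : Type*} [DecidableEq Λ] (N : ℕ) (a b : Λ)
    (σ : Λ → Fin (N + 1)) : (ZR.move N a b σ b : ℕ) = (σ b : ℕ) - 1 := by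
  simp [ZR.move]

lemma ZR.move_other {Λ : Type*} [DecidableEq Λ] (N : ℕ) {a b z : Λ}
    (hza : z ≠ a) (hzb : z ≠ b) (σ : Λ → Fin (N + 1)) :
    ZR.move N a b σ z = σ z := by
  simp [ZR.move, Function.update_of_ne hza, Function.update_of_ne hzb]

lemma ZR.sum_val_update {Λ : Type*} [DecidableEq Λ] {N : ℕ} (s : Finset Λ)
    (f : Λ → Fin (N + 1)) (a : Λ) (b : Fin (N + 1)) (ha : a ∈ s) :
    ∑ z ∈ s, (Function.update f a b z : ℕ) = (b : ℕ) + ∑ z ∈ s.erase a, (f z : ℕ) :=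
  ZR.sum_comp_update (fun v : Fin (N + 1) => (v : ℕ)) f a b s ha

lemma ZR.sum_val_update_notmem {Λ : Type*} [DecidableEq Λ] {N : ℕ} (s : Finset Λ)
    (f : Λ → Fin (N + 1)) (a : Λ) (b : Fin (N + 1)) (ha : a ∉ s) :
    ∑ z ∈ s, (Function.update f a b z : ℕ) = ∑ z ∈ s, (f z : ℕ) :=
  ZR.sum_comp_update_notmem (fun v : Fin (N + 1) => (v : ℕ)) f a b s ha

lemma ZR.prod_cf_update (c : ℕ → ℝ) {Λ : Type*} [DecidableEq Λ] {N : ℕ} (s : Finset Λ)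
    (f : Λ → Fin (N + 1)) (a : Λ) (b : Fin (N + 1)) (ha : a ∈ s) :
    ∏ z ∈ s, (cfact c (Function.update f a b z : ℕ))⁻¹
      = (cfact c (b : ℕ))⁻¹ * ∏ z ∈ s.erase a, (cfact c (f z : ℕ))⁻¹ :=
  ZR.prod_comp_update (fun v : Fin (N + 1) => (cfact c (v : ℕ))⁻¹) f a b s ha

lemma ZR.algebra (a b d e r s : ℝ) (ha : a ≠ 0) (hb : b ≠ 0) (hd : d ≠ 0) (he : e ≠ 0) :
    ((a * b)⁻¹ * (d⁻¹ * r)) * (b * (s / e)) = a⁻¹ * ((d * e)⁻¹ * r) * s := by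
  field_simp

lemma ZR.key {Λ : Type*} [Fintype Λ] [DecidableEq Λ]
    (c : ℕ → ℝ) (hc0 : c 0 = 0) (hcpos : ∀ k, 0 < k → 0 < c k)
    (Λ₁ : Finset Λ) (N n : ℕ) (hn1 : 1 ≤ n) (hnN : n ≤ N)
    {y : Λ} (hy : y ∉ Λ₁) {x : Λ} (hx : x ∈ Λ₁) :
    ∑ σ : Λ → Fin (N + 1),
      (if (∑ z, (σ z : ℕ)) = N ∧ (∑ z ∈ Λ₁, (σ z : ℕ)) = n - 1
       then (∏ z, (cfact c (σ z : ℕ))⁻¹) *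
         (c (σ y : ℕ) * ((((σ x : ℕ) : ℝ) + 1) / c ((σ x : ℕ) + 1))) else 0)
    = ∑ σ : Λ → Fin (N + 1),
      (if (∑ z, (σ z : ℕ)) = N ∧ (∑ z ∈ Λ₁, (σ z : ℕ)) = n
       then (∏ z, (cfact c (σ z : ℕ))⁻¹) * ((σ x : ℕ) : ℝ) else 0) := by
  classical
  have hxy : x ≠ y := fun h => hy (h ▸ hx)
  have hyx : y ≠ x := hxy.symm
  have hcf : ∀ m, cfact c m ≠ 0 := fun m => (ZR.cfact_pos c hcpos m).ne'
  rw [← Finset.sum_filter, ← Finset.sum_filter]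
  set s : Finset (Λ → Fin (N + 1)) :=
    Finset.univ.filter (fun σ => ((∑ z, (σ z : ℕ)) = N ∧ (∑ z ∈ Λ₁, (σ z : ℕ)) = n - 1)
      ∧ 1 ≤ (σ y : ℕ)) with hs
  set t : Finset (Λ → Fin (N + 1)) :=
    Finset.univ.filter (fun σ => ((∑ z, (σ z : ℕ)) = N ∧ (∑ z ∈ Λ₁, (σ z : ℕ)) = n)
      ∧ 1 ≤ (σ x : ℕ)) with ht
  have hL : ∑ σ ∈ Finset.univ.filter
        (fun σ : Λ → Fin (N+1) => (∑ z, (σ z : ℕ)) = N ∧ (∑ z ∈ Λ₁, (σ z : ℕ)) = n - 1),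
        (∏ z, (cfact c (σ z : ℕ))⁻¹) *
          (c (σ y : ℕ) * ((((σ x : ℕ) : ℝ) + 1) / c ((σ x : ℕ) + 1)))
      = ∑ σ ∈ s, (∏ z, (cfact c (σ z : ℕ))⁻¹) *
          (c (σ y : ℕ) * ((((σ x : ℕ) : ℝ) + 1) / c ((σ x : ℕ) + 1))) := by
    refine (Finset.sum_subset ?_ ?_).symm
    · intro σ hσ
      simp only [hs, Finset.mem_filter] at hσ ⊢
      exact ⟨hσ.1, hσ.2.1⟩
    · intro σ hσ1 hσ2
      simp only [hs, Finset.mem_filter, Finset.mem_univ, true_and] at hσ1 hσ2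
      have h0 : (σ y : ℕ) = 0 := by omega
      rw [h0, hc0]
      ring
  have hR : ∑ σ ∈ Finset.univ.filter
        (fun σ : Λ → Fin (N+1) => (∑ z, (σ z : ℕ)) = N ∧ (∑ z ∈ Λ₁, (σ z : ℕ)) = n),
        (∏ z, (cfact c (σ z : ℕ))⁻¹) * ((σ x : ℕ) : ℝ)
      = ∑ σ ∈ t, (∏ z, (cfact c (σ z : ℕ))⁻¹) * ((σ x : ℕ) : ℝ) := by
    refine (Finset.sum_subset ?_ ?_).symm
    · intro σ hσ
      simp only [ht, Finset.mem_filter] at hσ ⊢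
      exact ⟨hσ.1, hσ.2.1⟩
    · intro σ hσ1 hσ2
      simp only [ht, Finset.mem_filter, Finset.mem_univ, true_and] at hσ1 hσ2
      have h0 : (σ x : ℕ) = 0 := by omega
      rw [h0]
      simp
  rw [hL, hR]
  have hxey : x ∈ Finset.univ.erase y := Finset.mem_erase.mpr ⟨hxy, Finset.mem_univ x⟩
  have hyex : y ∈ Finset.univ.erase x := Finset.mem_erase.mpr ⟨hyx, Finset.mem_univ y⟩
  have hyeΛx : y ∉ Λ₁.erase x := fun h => hy (Finset.mem_of_mem_erase h)
  refine Finset.sum_bij' (fun σ _ => ZR.move N x y σ) (fun σ _ => ZR.move N y x σ)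
    ?_ ?_ ?_ ?_ ?_
  -- membership: i σ ∈ t
  · intro σ hσ
    simp only [hs, Finset.mem_filter, Finset.mem_univ, true_and] at hσ
    obtain ⟨⟨hN, hn'⟩, hy1⟩ := hσ
    have hpair : (σ x : ℕ) + (σ y : ℕ) ≤ N := by
      simpa [hN] using ZR.pair_le_sum hxy (fun z => (σ z : ℕ))
    have hmin : min ((σ x : ℕ) + 1) N = (σ x : ℕ) + 1 := min_eq_left (by omega)
    have hsum : ∑ z, (ZR.move N x y σ z : ℕ) = N := by
      simp only [ZR.move]
      rw [ZR.sum_val_update _ _ _ _ (Finset.mem_univ y), ZR.sum_val_update _ _ _ _ hxey]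
      rw [← Finset.add_sum_erase _ _ (Finset.mem_univ y),
        ← Finset.add_sum_erase _ _ hxey] at hN
      simp only [Fin.val_mk, hmin]
      omega
    have hsum1 : ∑ z ∈ Λ₁, (ZR.move N x y σ z : ℕ) = n := by
      simp only [ZR.move]
      rw [ZR.sum_val_update_notmem _ _ _ _ hy, ZR.sum_val_update _ _ _ _ hx]
      rw [← Finset.add_sum_erase _ _ hx] at hn'
      simp only [Fin.val_mk, hmin]
      omega
    simp only [ht, Finset.mem_filter, Finset.mem_univ, true_and]
    refine ⟨⟨hsum, hsum1⟩, ?_⟩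
    rw [ZR.move_fst N hxy, hmin]
    omega
  -- membership: j σ ∈ s
  · intro σ hσ
    simp only [ht, Finset.mem_filter, Finset.mem_univ, true_and] at hσ
    obtain ⟨⟨hN, hn'⟩, hx1⟩ := hσ
    have hpair : (σ x : ℕ) + (σ y : ℕ) ≤ N := by
      simpa [hN] using ZR.pair_le_sum hxy (fun z => (σ z : ℕ))
    have hmin : min ((σ y : ℕ) + 1) N = (σ y : ℕ) + 1 := min_eq_left (by omega)
    have hsum : ∑ z, (ZR.move N y x σ z : ℕ) = N := by
      simp only [ZR.move]
      rw [ZR.sum_val_update _ _ _ _ (Finset.mem_univ x), ZR.sum_val_update _ _ _ _ hyex]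
      rw [← Finset.add_sum_erase _ _ (Finset.mem_univ x),
        ← Finset.add_sum_erase _ _ hyex] at hN
      simp only [Fin.val_mk, hmin]
      omega
    have hsum1 : ∑ z ∈ Λ₁, (ZR.move N y x σ z : ℕ) = n - 1 := by
      simp only [ZR.move]
      rw [ZR.sum_val_update _ _ _ _ hx, ZR.sum_val_update_notmem _ _ _ _ hyeΛx]
      rw [← Finset.add_sum_erase _ _ hx] at hn'
      simp only [Fin.val_mk]
      omega
    simp only [hs, Finset.mem_filter, Finset.mem_univ, true_and]
    refine ⟨⟨hsum, hsum1⟩, ?_⟩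
    rw [ZR.move_fst N hyx, hmin]
    omega
  -- left inverse
  · intro σ hσ
    simp only [hs, Finset.mem_filter, Finset.mem_univ, true_and] at hσ
    obtain ⟨⟨hN, hn'⟩, hy1⟩ := hσ
    have hpair : (σ x : ℕ) + (σ y : ℕ) ≤ N := by
      simpa [hN] using ZR.pair_le_sum hxy (fun z => (σ z : ℕ))
    funext z
    by_cases hzx : z = x
    · rw [hzx]
      refine Fin.ext ?_
      rw [ZR.move_snd N y x, ZR.move_fst N hxy]
      omega
    · by_cases hzy : z = y
      · rw [hzy]
        refine Fin.ext ?_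
        rw [ZR.move_fst N hyx, ZR.move_snd N x y]
        have : (σ y : ℕ) ≤ N := by omega
        omega
      · show ZR.move N y x (ZR.move N x y σ) z = σ z
        rw [ZR.move_other N hzy hzx, ZR.move_other N hzx hzy]
  -- right inverse
  · intro σ hσ
    simp only [ht, Finset.mem_filter, Finset.mem_univ, true_and] at hσ
    obtain ⟨⟨hN, hn'⟩, hx1⟩ := hσ
    have hpair : (σ x : ℕ) + (σ y : ℕ) ≤ N := by
      simpa [hN] using ZR.pair_le_sum hxy (fun z => (σ z : ℕ))
    funext z
    by_cases hzy : z = y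
    · rw [hzy]
      refine Fin.ext ?_
      rw [ZR.move_snd N x y, ZR.move_fst N hyx]
      omega
    · by_cases hzx : z = x
      · rw [hzx]
        refine Fin.ext ?_
        rw [ZR.move_fst N hxy, ZR.move_snd N y x]
        have : (σ x : ℕ) ≤ N := by omega
        omega
      · show ZR.move N x y (ZR.move N y x σ) z = σ z
        rw [ZR.move_other N hzx hzy, ZR.move_other N hzy hzx]
  -- values agree
  · intro σ hσ
    simp only [hs, Finset.mem_filter, Finset.mem_univ, true_and] at hσ
    obtain ⟨⟨hN, hn'⟩, hy1⟩ := hσ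
    have hpair : (σ x : ℕ) + (σ y : ℕ) ≤ N := by
      simpa [hN] using ZR.pair_le_sum hxy (fun z => (σ z : ℕ))
    have hmin : min ((σ x : ℕ) + 1) N = (σ x : ℕ) + 1 := min_eq_left (by omega)
    have hPt : ∏ z, (cfact c (ZR.move N x y σ z : ℕ))⁻¹
        = (cfact c ((σ y : ℕ) - 1))⁻¹ * ((cfact c ((σ x : ℕ) + 1))⁻¹ *
            ∏ z ∈ (Finset.univ.erase y).erase x, (cfact c (σ z : ℕ))⁻¹) := by
      simp only [ZR.move]
      rw [ZR.prod_cf_update _ _ _ _ _ (Finset.mem_univ y), ZR.prod_cf_update _ _ _ _ _ hxey]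
      simp only [Fin.val_mk, hmin]
    have hPs : ∏ z, (cfact c (σ z : ℕ))⁻¹
        = (cfact c (σ y : ℕ))⁻¹ * ((cfact c (σ x : ℕ))⁻¹ *
            ∏ z ∈ (Finset.univ.erase y).erase x, (cfact c (σ z : ℕ))⁻¹) := by
      rw [← Finset.mul_prod_erase _ _ (Finset.mem_univ y),
        ← Finset.mul_prod_erase _ _ hxey]
    have hvx : ((ZR.move N x y σ x : ℕ) : ℝ) = ((σ x : ℕ) : ℝ) + 1 := by
      rw [ZR.move_fst N hxy, hmin]
      push_cast
      ring
    rw [hPt, hPs, hvx]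
    obtain ⟨m, hm⟩ : ∃ m, (σ y : ℕ) = m + 1 := ⟨(σ y : ℕ) - 1, by omega⟩
    rw [hm]
    simp only [Nat.add_sub_cancel]
    rw [ZR.cfact_succ c m, ZR.cfact_succ c (σ x : ℕ)]
    exact ZR.algebra _ _ _ _ _ _ (hcf m) (hcpos _ m.succ_pos).ne'
      (hcf _) (hcpos _ (σ x : ℕ).succ_pos).ne'

/-- Normalization identity:
`(γ(n−1)/(n γ(n))) ν_Λ^N[c(η_y) ∑_{x∈Λ₁} h(η_x) | η̄_{Λ₁}=n−1] = 1`, with `h(k)=(k+1)/c(k+1)`. -/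
theorem normalization_identity {Λ : Type*} [Fintype Λ] [DecidableEq Λ]
    (c : ℕ → ℝ) (hc0 : c 0 = 0) (hcpos : ∀ k, 0 < k → 0 < c k)
    (Λ₁ Λ₂ : Finset Λ) (hdisj : Disjoint Λ₁ Λ₂) (hpart : Λ₁ ∪ Λ₂ = Finset.univ)
    (hΛ₁ : Λ₁.Nonempty) (hΛ₂ : Λ₂.Nonempty)
    (N n : ℕ) (hn1 : 1 ≤ n) (hnN : n ≤ N)
    (y : Λ) (hy : y ∈ Λ₂)
    (hγ : 0 < gammaFun c Λ₁ N n) (hγ' : 0 < gammaFun c Λ₁ N (n - 1)) :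
    (gammaFun c Λ₁ N (n - 1) / ((n : ℝ) * gammaFun c Λ₁ N n)) *
      condExp c Λ₁ N (n - 1) (fun η =>
        c (η y) * ∑ x ∈ Λ₁, ((η x : ℝ) + 1) / c (η x + 1)) = 1 := by
  classical
  have hyΛ₁ : y ∉ Λ₁ := fun h => (Finset.disjoint_left.mp hdisj h) hy
  simp only [gammaFun, condExp] at hγ hγ' ⊢
  set Z := ∑ σ : Λ → Fin (N+1),
      if (∑ z, (σ z : ℕ)) = N then ∏ z, (cfact c (σ z : ℕ))⁻¹ else 0 with hZdef
  set A1 := ∑ σ : Λ → Fin (N+1),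
      if (∑ z, (σ z : ℕ)) = N ∧ (∑ z ∈ Λ₁, (σ z : ℕ)) = n
      then ∏ z, (cfact c (σ z : ℕ))⁻¹ else 0 with hA1def
  set A0 := ∑ σ : Λ → Fin (N+1),
      if (∑ z, (σ z : ℕ)) = N ∧ (∑ z ∈ Λ₁, (σ z : ℕ)) = n - 1
      then ∏ z, (cfact c (σ z : ℕ))⁻¹ else 0 with hA0def
  have hZ : Z ≠ 0 := by
    intro h; rw [h, div_zero] at hγ; exact lt_irrefl 0 hγ
  have hA1 : A1 ≠ 0 := by
    intro h; rw [h, zero_div] at hγ; exact lt_irrefl 0 hγ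
  have hA0 : A0 ≠ 0 := by
    intro h; rw [h, zero_div] at hγ'; exact lt_irrefl 0 hγ'
  have hnne : (n : ℝ) ≠ 0 := Nat.cast_ne_zero.mpr (by omega)
  have hB : (∑ σ : Λ → Fin (N+1),
      if (∑ z, (σ z : ℕ)) = N ∧ (∑ z ∈ Λ₁, (σ z : ℕ)) = n - 1
      then (∏ z, (cfact c (σ z : ℕ))⁻¹) *
        (c (σ y : ℕ) * ∑ x ∈ Λ₁, (((σ x : ℕ) : ℝ) + 1) / c ((σ x : ℕ) + 1)) else 0)
      = (n : ℝ) * A1 := by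
    have e1 : (∑ σ : Λ → Fin (N+1),
        if (∑ z, (σ z : ℕ)) = N ∧ (∑ z ∈ Λ₁, (σ z : ℕ)) = n - 1
        then (∏ z, (cfact c (σ z : ℕ))⁻¹) *
          (c (σ y : ℕ) * ∑ x ∈ Λ₁, (((σ x : ℕ) : ℝ) + 1) / c ((σ x : ℕ) + 1)) else 0)
        = ∑ σ : Λ → Fin (N+1), ∑ x ∈ Λ₁,
          (if (∑ z, (σ z : ℕ)) = N ∧ (∑ z ∈ Λ₁, (σ z : ℕ)) = n - 1
           then (∏ z, (cfact c (σ z : ℕ))⁻¹) *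
             (c (σ y : ℕ) * ((((σ x : ℕ) : ℝ) + 1) / c ((σ x : ℕ) + 1))) else 0) := by
      refine Finset.sum_congr rfl fun σ _ => ?_
      by_cases h : (∑ z, (σ z : ℕ)) = N ∧ (∑ z ∈ Λ₁, (σ z : ℕ)) = n - 1
      · simp only [if_pos h, Finset.mul_sum]
      · simp only [if_neg h, Finset.sum_const_zero]
    rw [e1, Finset.sum_comm]
    have e2 : ∀ x ∈ Λ₁, (∑ σ : Λ → Fin (N+1),
        if (∑ z, (σ z : ℕ)) = N ∧ (∑ z ∈ Λ₁, (σ z : ℕ)) = n - 1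
        then (∏ z, (cfact c (σ z : ℕ))⁻¹) *
          (c (σ y : ℕ) * ((((σ x : ℕ) : ℝ) + 1) / c ((σ x : ℕ) + 1))) else 0)
        = ∑ σ : Λ → Fin (N+1),
          (if (∑ z, (σ z : ℕ)) = N ∧ (∑ z ∈ Λ₁, (σ z : ℕ)) = n
           then (∏ z, (cfact c (σ z : ℕ))⁻¹) * ((σ x : ℕ) : ℝ) else 0) :=
      fun x hx => ZR.key c hc0 hcpos Λ₁ N n hn1 hnN hyΛ₁ hx
    rw [Finset.sum_congr rfl e2, Finset.sum_comm]
    have e3 : ∀ σ : Λ → Fin (N+1), (∑ x ∈ Λ₁,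
        if (∑ z, (σ z : ℕ)) = N ∧ (∑ z ∈ Λ₁, (σ z : ℕ)) = n
        then (∏ z, (cfact c (σ z : ℕ))⁻¹) * ((σ x : ℕ) : ℝ) else 0)
        = (n : ℝ) * (if (∑ z, (σ z : ℕ)) = N ∧ (∑ z ∈ Λ₁, (σ z : ℕ)) = n
           then ∏ z, (cfact c (σ z : ℕ))⁻¹ else 0) := by
      intro σ
      by_cases h : (∑ z, (σ z : ℕ)) = N ∧ (∑ z ∈ Λ₁, (σ z : ℕ)) = n
      · simp only [if_pos h]
        rw [← Finset.mul_sum]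
        have : ∑ x ∈ Λ₁, ((σ x : ℕ) : ℝ) = (n : ℝ) := by
          rw [← Nat.cast_sum, h.2]
        rw [this]
        ring
      · simp only [if_neg h, Finset.sum_const_zero, mul_zero]
    rw [Finset.sum_congr rfl (fun σ _ => e3 σ), ← Finset.mul_sum, ← hA1def]
  rw [hB]
  field_simp
end
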